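/- For the meridian surface M″_m on the rotational hypersurface with spacelike axis, the mean curvature vector H = −((κ_m f√(ḟ²+ġ²) + ġ)/(2f√(ḟ²+ġ²)))·n₁ − (κ/(2f))·n₂ (with ⟨n₁,n₁⟩ = 1, ⟨n₂,n₂⟩ = −1, ⟨n₁,n₂⟩ = 0) is lightlike and nonzero if and only if κ ≠ 0 and κ² = (κ_m f√(ḟ²+ġ²) + ġ)²/(ḟ² + ġ²). -/

import Mathlib

/-- The meridian surface M″_m (spacelike axis) is marginally trapped, i.e. its mean
curvature vector H = −((κ_m f√(ḟ²+ġ²)+ġ)/(2f√(ḟ²+ġ²)))n₁ − (κ/(2f))n₂ is lightlike and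
nonzero, if and only if κ ≠ 0 and κ² = (κ_m f√(ḟ²+ġ²)+ġ)²/(ḟ²+ġ²). -/
theorem stmt_12 (f f' g' κ κm : ℝ) (hf : 0 < f) (hE : 0 < f' ^ 2 + g' ^ 2)
    (D : ℝ) (hD : D = Real.sqrt (f' ^ 2 + g' ^ 2))
    (h₁ h₂ : ℝ)
    (hh₁ : h₁ = -((κm * f * D + g') / (2 * f * D))) -- n₁-component of H
    (hh₂ : h₂ = -(κ / (2 * f)))                     -- n₂-component of H
    (HH : ℝ) (hHH : HH = h₁ ^ 2 - h₂ ^ 2) :         -- ⟨H,H⟩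
    (¬(h₁ = 0 ∧ h₂ = 0) ∧ HH = 0) ↔
      (κ ≠ 0 ∧ κ ^ 2 = (κm * f * D + g') ^ 2 / (f' ^ 2 + g' ^ 2)) := by
  have hDpos : 0 < D := by rw [hD]; positivity
  have hD2 : D ^ 2 = f' ^ 2 + g' ^ 2 := by
    rw [hD, Real.sq_sqrt hE.le]
  have hfne : f ≠ 0 := hf.ne'
  have hDne : D ≠ 0 := hDpos.ne'
  set A := κm * f * D + g' with hA
  have hh1sq : h₁ ^ 2 = A ^ 2 / (4 * f ^ 2 * D ^ 2) := by
    rw [hh₁, neg_sq, div_pow]; congr 1; ring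
  have hh2sq : h₂ ^ 2 = κ ^ 2 / (4 * f ^ 2) := by
    rw [hh₂, neg_sq, div_pow]; congr 1; ring
  constructor
  · rintro ⟨hne, hzero⟩
    have hsq : h₁ ^ 2 = h₂ ^ 2 := by linarith [hHH ▸ hzero]
    have hκ : κ ≠ 0 := by
      intro hk
      apply hne
      have h2 : h₂ = 0 := by rw [hh₂, hk]; simp
      have h1 : h₁ ^ 2 = 0 := by rw [hsq, h2]; ring
      exact ⟨pow_eq_zero_iff (n := 2) (by norm_num) |>.mp h1, h2⟩
    refine ⟨hκ, ?_⟩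
    rw [hh1sq, hh2sq] at hsq
    rw [← hD2]
    field_simp at hsq ⊢
    have h4 : (0:ℝ) < 4 * f ^ 2 := by positivity
    nlinarith [hsq, sq_nonneg f]
  · rintro ⟨hκ, heq⟩
    rw [← hD2] at heq
    have hsq : h₁ ^ 2 = h₂ ^ 2 := by
      rw [hh1sq, hh2sq, heq]
      field_simp
    constructor
    · rintro ⟨h1, h2⟩
      apply hκ
      rw [hh₂] at h2
      field_simp at h2
      linarith
    · rw [hHH, hsq]; ring
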